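/- If U on X and V on Y are equivalent after extension, then they are equivalent after extension with extension spaces X₀ = Y and Y₀ = X via operators E : Y ⊕ X → X ⊕ Y and F : X ⊕ Y → Y ⊕ X such that the (1,2)-block of F is I_Y, the (1,2)-block of F⁻¹ is I_X, the (1,2)-block of E is U, and the (1,2)-block of E⁻¹ is V. -/

import Mathlib

open ContinuousLinearMap

/-- 2×2 block operator matrix `[[A, B],[C, D]] : X ⊕ Y → X' ⊕ Y'`. -/
noncomputable def blk {X Y X' Y' : Type*} [NormedAddCommGroup X] [NormedSpace ℝ X]
    [NormedAddCommGroup Y] [NormedSpace ℝ Y] [NormedAddCommGroup X'] [NormedSpace ℝ X']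
    [NormedAddCommGroup Y'] [NormedSpace ℝ Y']
    (A : X →L[ℝ] X') (B : Y →L[ℝ] X') (C : X →L[ℝ] Y') (D : Y →L[ℝ] Y') :
    (X × Y) →L[ℝ] (X' × Y') :=
  (A.coprod B).prod (C.coprod D)

section blocks
variable {X Y X' Y' : Type*} [NormedAddCommGroup X] [NormedSpace ℝ X]
    [NormedAddCommGroup Y] [NormedSpace ℝ Y] [NormedAddCommGroup X'] [NormedSpace ℝ X']
    [NormedAddCommGroup Y'] [NormedSpace ℝ Y']

/-- (1,1)-entry of a block operator. -/
noncomputable def b11 (T : (X × Y) →L[ℝ] (X' × Y')) : X →L[ℝ] X' :=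
  (ContinuousLinearMap.fst ℝ X' Y').comp (T.comp (ContinuousLinearMap.inl ℝ X Y))

/-- (1,2)-entry of a block operator. -/
noncomputable def b12 (T : (X × Y) →L[ℝ] (X' × Y')) : Y →L[ℝ] X' :=
  (ContinuousLinearMap.fst ℝ X' Y').comp (T.comp (ContinuousLinearMap.inr ℝ X Y))

/-- (2,1)-entry of a block operator. -/
noncomputable def b21 (T : (X × Y) →L[ℝ] (X' × Y')) : X →L[ℝ] Y' :=
  (ContinuousLinearMap.snd ℝ X' Y').comp (T.comp (ContinuousLinearMap.inl ℝ X Y))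

/-- (2,2)-entry of a block operator. -/
noncomputable def b22 (T : (X × Y) →L[ℝ] (X' × Y')) : Y →L[ℝ] Y' :=
  (ContinuousLinearMap.snd ℝ X' Y').comp (T.comp (ContinuousLinearMap.inr ℝ X Y))

end blocks

section helper
variable {X Y X' Y' Z W : Type*} [NormedAddCommGroup X] [NormedSpace ℝ X]
    [NormedAddCommGroup Y] [NormedSpace ℝ Y] [NormedAddCommGroup X'] [NormedSpace ℝ X']
    [NormedAddCommGroup Y'] [NormedSpace ℝ Y'] [NormedAddCommGroup Z] [NormedSpace ℝ Z]
    [NormedAddCommGroup W] [NormedSpace ℝ W]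

@[simp] lemma blk_apply (A : X →L[ℝ] X') (B : Y →L[ℝ] X') (C : X →L[ℝ] Y') (D : Y →L[ℝ] Y')
    (p : X × Y) : blk A B C D p = (A p.1 + B p.2, C p.1 + D p.2) := rfl

lemma blk_comp (A : X' →L[ℝ] Z) (B : Y' →L[ℝ] Z) (C : X' →L[ℝ] W) (D : Y' →L[ℝ] W)
    (A' : X →L[ℝ] X') (B' : Y →L[ℝ] X') (C' : X →L[ℝ] Y') (D' : Y →L[ℝ] Y') :
    (blk A B C D).comp (blk A' B' C' D') =
      blk (A.comp A' + B.comp C') (A.comp B' + B.comp D')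
          (C.comp A' + D.comp C') (C.comp B' + D.comp D') := by
  ext p <;> simp [blk_apply]

lemma blk_id : blk (ContinuousLinearMap.id ℝ X) 0 0 (ContinuousLinearMap.id ℝ Y) =
    ContinuousLinearMap.id ℝ (X × Y) := by
  ext p <;> simp [blk_apply]

lemma b12_blk (A : X →L[ℝ] X') (B : Y →L[ℝ] X') (C : X →L[ℝ] Y') (D : Y →L[ℝ] Y') :
    b12 (blk A B C D) = B := by
  ext y; simp [b12, blk_apply]

@[simp] lemma b11_apply (T : (X × Y) →L[ℝ] (X' × Y')) (x : X) : b11 T x = (T (x, 0)).1 := rfl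
@[simp] lemma b12_apply (T : (X × Y) →L[ℝ] (X' × Y')) (y : Y) : b12 T y = (T (0, y)).1 := rfl
@[simp] lemma b21_apply (T : (X × Y) →L[ℝ] (X' × Y')) (x : X) : b21 T x = (T (x, 0)).2 := rfl
@[simp] lemma b22_apply (T : (X × Y) →L[ℝ] (X' × Y')) (y : Y) : b22 T y = (T (0, y)).2 := rfl

lemma fst_split (T : (X × Y) →L[ℝ] (X' × Y')) (a : X) (b : Y) :
    (T (a, b)).1 = (T (a, 0)).1 + (T (0, b)).1 := by
  rw [← Prod.fst_add, ← map_add]; simp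

lemma snd_split (T : (X × Y) →L[ℝ] (X' × Y')) (a : X) (b : Y) :
    (T (a, b)).2 = (T (a, 0)).2 + (T (0, b)).2 := by
  rw [← Prod.snd_add, ← map_add]; simp

lemma fst_inr_add (T : (X × Y) →L[ℝ] (X' × Y')) (a b : Y) :
    (T (0, a + b)).1 = (T (0, a)).1 + (T (0, b)).1 := by
  rw [show ((0 : X), a + b) = (0, a) + (0, b) by simp, map_add, Prod.fst_add]

lemma fst_inr_neg (T : (X × Y) →L[ℝ] (X' × Y')) (a : Y) :
    (T (0, -a)).1 = -(T (0, a)).1 := by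
  rw [show ((0 : X), -a) = -((0, a) : X × Y) by simp, map_neg, Prod.fst_neg]

lemma fst_inl_neg (T : (X × Y) →L[ℝ] (X' × Y')) (a : X) :
    (T (-a, 0)).1 = -(T (a, 0)).1 := by
  rw [show ((-a : X), (0 : Y)) = -((a, 0) : X × Y) by simp, map_neg, Prod.fst_neg]

end helper

/-- From a matricial coupling `[[U, K],[L, M]]⁻¹ = [[A, B],[C, V]]` (expressed through the
eight product identities) one gets equivalence after extension with extension spaces `Y`, `X`
and the prescribed corner blocks. -/
lemma main_from_coupling {X Y : Type*} [NormedAddCommGroup X] [NormedSpace ℝ X]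
    [NormedAddCommGroup Y] [NormedSpace ℝ Y]
    (U : X →L[ℝ] X) (V : Y →L[ℝ] Y) (K : Y →L[ℝ] X) (L : X →L[ℝ] Y)
    (M : Y →L[ℝ] Y) (A : X →L[ℝ] X) (B : Y →L[ℝ] X) (C : X →L[ℝ] Y)
    (I1 : K.comp C + U.comp A = ContinuousLinearMap.id ℝ X)
    (I2 : K.comp V + U.comp B = 0)
    (I3 : M.comp C + L.comp A = 0)
    (I4 : M.comp V + L.comp B = ContinuousLinearMap.id ℝ Y)
    (I5 : A.comp U + B.comp L = ContinuousLinearMap.id ℝ X)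
    (I6 : A.comp K + B.comp M = 0)
    (I7 : C.comp U + V.comp L = 0)
    (I8 : C.comp K + V.comp M = ContinuousLinearMap.id ℝ Y) :
    ∃ (E2 : (Y × X) →L[ℝ] (X × Y)) (E2' : (X × Y) →L[ℝ] (Y × X))
      (F2 : (X × Y) →L[ℝ] (Y × X)) (F2' : (Y × X) →L[ℝ] (X × Y)),
      E2.comp E2' = ContinuousLinearMap.id ℝ (X × Y) ∧
      E2'.comp E2 = ContinuousLinearMap.id ℝ (Y × X) ∧
      F2.comp F2' = ContinuousLinearMap.id ℝ (Y × X) ∧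
      F2'.comp F2 = ContinuousLinearMap.id ℝ (X × Y) ∧
      blk U 0 0 (ContinuousLinearMap.id ℝ Y) =
        E2.comp ((blk V 0 0 (ContinuousLinearMap.id ℝ X)).comp F2) ∧
      b12 F2 = ContinuousLinearMap.id ℝ Y ∧
      b12 F2' = ContinuousLinearMap.id ℝ X ∧
      b12 E2 = U ∧ b12 E2' = V := by
  have D1 : -(A.comp (U.comp B)) + B.comp (M.comp V) = 0 := by
    ext y
    have h2 : K (V y) + U (B y) = 0 := DFunLike.congr_fun I2 y
    have h6 : A (K (V y)) + B (M (V y)) = 0 := DFunLike.congr_fun I6 (V y)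
    have hu : U (B y) = -K (V y) := by rwa [add_comm, add_eq_zero_iff_eq_neg] at h2
    simp only [add_apply, neg_apply, comp_apply, zero_apply, hu, map_neg, neg_neg]
    exact h6
  have D2 : -(M.comp (V.comp L)) + L.comp (A.comp U) = 0 := by
    ext x
    have h7 : C (U x) + V (L x) = 0 := DFunLike.congr_fun I7 x
    have h3 : M (C (U x)) + L (A (U x)) = 0 := DFunLike.congr_fun I3 (U x)
    have hv : V (L x) = -C (U x) := by rwa [add_comm, add_eq_zero_iff_eq_neg] at h7
    simp only [add_apply, neg_apply, comp_apply, zero_apply, hv, map_neg, neg_neg]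
    exact h3
  have D3 : -(K.comp (V.comp L)) + U.comp (A.comp U) = U := by
    ext x
    have h7 : C (U x) + V (L x) = 0 := DFunLike.congr_fun I7 x
    have h1 : K (C (U x)) + U (A (U x)) = U x := DFunLike.congr_fun I1 (U x)
    have hv : V (L x) = -C (U x) := by rwa [add_comm, add_eq_zero_iff_eq_neg] at h7
    simp only [add_apply, neg_apply, comp_apply, hv, map_neg, neg_neg]
    exact h1
  refine ⟨blk K U M L, blk C V A B, blk (-L) (ContinuousLinearMap.id ℝ Y) (A.comp U) B,
      blk (-B) (ContinuousLinearMap.id ℝ X) (M.comp V) L, ?_, ?_, ?_, ?_, ?_, ?_, ?_, ?_, ?_⟩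
  · rw [blk_comp, I1, I2, I3, I4, blk_id]
  · rw [blk_comp, I8, I7, I6, I5, blk_id]
  · rw [blk_comp]
    simp only [neg_comp, comp_neg, neg_neg, id_comp, comp_id, neg_add_cancel, comp_assoc]
    rw [add_comm (L.comp B), I4, D1, I5, blk_id]
  · rw [blk_comp]
    simp only [neg_comp, comp_neg, neg_neg, id_comp, comp_id, neg_add_cancel, comp_assoc]
    rw [add_comm (B.comp L), I5, D2, I4, blk_id]
  · rw [blk_comp, blk_comp]
    simp only [zero_comp, comp_zero, add_zero, zero_add, neg_zero, comp_id, id_comp, comp_neg,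
      neg_comp, comp_assoc]
    rw [D3, I2, D2, I4]
  · exact b12_blk ..
  · exact b12_blk ..
  · exact b12_blk ..
  · exact b12_blk ..

/-- Equivalence after extension can always be realized with extension spaces `X₀ = Y`,
`Y₀ = X` and with the specified corner blocks. -/
theorem stmt8 {X Y X₀ Y₀ : Type*} [NormedAddCommGroup X] [NormedSpace ℝ X] [CompleteSpace X]
    [NormedAddCommGroup Y] [NormedSpace ℝ Y] [CompleteSpace Y]
    [NormedAddCommGroup X₀] [NormedSpace ℝ X₀] [CompleteSpace X₀]
    [NormedAddCommGroup Y₀] [NormedSpace ℝ Y₀] [CompleteSpace Y₀]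
    (U : X →L[ℝ] X) (V : Y →L[ℝ] Y)
    (E : (Y × Y₀) →L[ℝ] (X × X₀)) (Einv : (X × X₀) →L[ℝ] (Y × Y₀))
    (F : (X × X₀) →L[ℝ] (Y × Y₀)) (Finv : (Y × Y₀) →L[ℝ] (X × X₀))
    (hE1 : E.comp Einv = ContinuousLinearMap.id ℝ (X × X₀))
    (hE2 : Einv.comp E = ContinuousLinearMap.id ℝ (Y × Y₀))
    (hF1 : F.comp Finv = ContinuousLinearMap.id ℝ (Y × Y₀))
    (hF2 : Finv.comp F = ContinuousLinearMap.id ℝ (X × X₀))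
    (hEq : blk U 0 0 (ContinuousLinearMap.id ℝ X₀) =
      E.comp ((blk V 0 0 (ContinuousLinearMap.id ℝ Y₀)).comp F)) :
    ∃ (E2 : (Y × X) →L[ℝ] (X × Y)) (E2' : (X × Y) →L[ℝ] (Y × X))
      (F2 : (X × Y) →L[ℝ] (Y × X)) (F2' : (Y × X) →L[ℝ] (X × Y)),
      E2.comp E2' = ContinuousLinearMap.id ℝ (X × Y) ∧
      E2'.comp E2 = ContinuousLinearMap.id ℝ (Y × X) ∧
      F2.comp F2' = ContinuousLinearMap.id ℝ (Y × X) ∧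
      F2'.comp F2 = ContinuousLinearMap.id ℝ (X × Y) ∧
      blk U 0 0 (ContinuousLinearMap.id ℝ Y) =
        E2.comp ((blk V 0 0 (ContinuousLinearMap.id ℝ X)).comp F2) ∧
      b12 F2 = ContinuousLinearMap.id ℝ Y ∧
      b12 F2' = ContinuousLinearMap.id ℝ X ∧
      b12 E2 = U ∧ b12 E2' = V := by
  -- pointwise consequences of the hypotheses
  have hE1p : ∀ p, E (Einv p) = p := fun p => by
    simpa using DFunLike.congr_fun hE1 p
  have hE2p : ∀ p, Einv (E p) = p := fun p => by
    simpa using DFunLike.congr_fun hE2 p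
  have hF1p : ∀ p, F (Finv p) = p := fun p => by
    simpa using DFunLike.congr_fun hF1 p
  have hF2p : ∀ p, Finv (F p) = p := fun p => by
    simpa using DFunLike.congr_fun hF2 p
  have hEqp : ∀ p : X × X₀, (U p.1, p.2) = E (V (F p).1, (F p).2) := fun p => by
    have := DFunLike.congr_fun hEq p
    simpa using this
  have h1 : ∀ p : X × X₀, Einv (U p.1, p.2) = (V (F p).1, (F p).2) := fun p => by
    rw [hEqp p, hE2p]
  have h2 : ∀ q : Y × Y₀, (U (Finv q).1, (Finv q).2) = E (V q.1, q.2) := fun q => by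
    have := hEqp (Finv q)
    rwa [hF1p q] at this
  -- the coupling blocks
  set K : Y →L[ℝ] X := b11 E with hK
  set L : X →L[ℝ] Y := -(b11 F) with hL
  set M : Y →L[ℝ] Y := (b12 F).comp (b21 E) with hM
  set A : X →L[ℝ] X := (b12 Finv).comp (b21 Einv) with hA
  set B : Y →L[ℝ] X := -(b11 Finv) with hB
  set C : X →L[ℝ] Y := b11 Einv with hC
  -- the eight coupling identities
  have I1 : K.comp C + U.comp A = ContinuousLinearMap.id ℝ X := by
    ext x
    simp only [hK, hL, hM, hA, hB, hC, add_apply, comp_apply, b11_apply, b12_apply, b21_apply,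
      id_apply, neg_apply, map_neg]
    have hU : U ((Finv (0, (Einv (x, 0)).2)).1) = (E (0, (Einv (x, 0)).2)).1 := by
      simpa using congrArg Prod.fst (h2 (0, (Einv (x, 0)).2))
    have hs : (E ((Einv (x, 0)).1, 0)).1 + (E (0, (Einv (x, 0)).2)).1 = x := by
      rw [← fst_split, Prod.mk.eta, hE1p]
    linear_combination (norm := abel) hU + hs
  have I2 : K.comp V + U.comp B = 0 := by
    ext y
    simp only [hK, hB, add_apply, comp_apply, b11_apply, neg_apply, map_neg, zero_apply]
    have hU : U ((Finv (y, 0)).1) = (E (V y, 0)).1 := by simpa using congrArg Prod.fst (h2 (y, 0))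
    linear_combination (norm := abel) -hU
  have I3 : M.comp C + L.comp A = 0 := by
    ext x
    simp only [hM, hC, hL, hA, add_apply, comp_apply, b11_apply, b12_apply, b21_apply,
      neg_apply, zero_apply]
    have ha : (E ((Einv (x, 0)).1, 0)).2 + (E (0, (Einv (x, 0)).2)).2 = 0 := by
      rw [← snd_split, Prod.mk.eta, hE1p]
    have hb : (Finv (0, (Einv (x, 0)).2)).2 = (E (0, (Einv (x, 0)).2)).2 := by
      simpa using congrArg Prod.snd (h2 (0, (Einv (x, 0)).2))
    have hc : (F ((Finv (0, (Einv (x, 0)).2)).1, 0)).1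
        + (F (0, (Finv (0, (Einv (x, 0)).2)).2)).1 = 0 := by
      rw [← fst_split, Prod.mk.eta, hF1p]
    have hd : (F (0, (E ((Einv (x, 0)).1, 0)).2)).1
        + (F (0, (E (0, (Einv (x, 0)).2)).2)).1 = 0 := by
      rw [← fst_inr_add, ha]
      rw [Prod.mk_zero_zero, map_zero, Prod.fst_zero]
    rw [hb] at hc
    linear_combination (norm := abel) hd - hc
  have I4 : M.comp V + L.comp B = ContinuousLinearMap.id ℝ Y := by
    ext y
    simp only [hM, hL, hB, add_apply, comp_apply, b11_apply, b12_apply, b21_apply, id_apply,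
      neg_apply, map_neg, neg_neg]
    have hb : (Finv (y, 0)).2 = (E (V y, 0)).2 := by simpa using congrArg Prod.snd (h2 (y, 0))
    have hs : (F ((Finv (y, 0)).1, 0)).1 + (F (0, (Finv (y, 0)).2)).1 = y := by
      rw [← fst_split, Prod.mk.eta, hF1p]
    rw [hb] at hs
    linear_combination (norm := abel) hs
  have I5 : A.comp U + B.comp L = ContinuousLinearMap.id ℝ X := by
    ext x
    simp only [hA, hB, hL, add_apply, comp_apply, b11_apply, b12_apply, b21_apply, id_apply,
      neg_apply, map_neg, neg_neg]
    have hsnd : (Einv (U x, 0)).2 = (F (x, 0)).2 := by simpa using congrArg Prod.snd (h1 (x, 0))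
    have hs : (Finv ((F (x, 0)).1, 0)).1 + (Finv (0, (F (x, 0)).2)).1 = x := by
      rw [← fst_split, Prod.mk.eta, hF2p]
    rw [hsnd]
    linear_combination (norm := abel) hs
  have I6 : A.comp K + B.comp M = 0 := by
    ext y
    simp only [hA, hB, hK, hM, add_apply, comp_apply, b11_apply, b12_apply, b21_apply,
      neg_apply, map_neg, neg_neg, zero_apply]
    have hb : (Einv (0, (E (y, 0)).2)).2 = (F (0, (E (y, 0)).2)).2 := by
      simpa using congrArg Prod.snd (h1 (0, (E (y, 0)).2))
    have ha : (Einv ((E (y, 0)).1, 0)).2 + (Einv (0, (E (y, 0)).2)).2 = 0 := by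
      rw [← snd_split, Prod.mk.eta, hE2p]
    have hc : (Finv ((F (0, (E (y, 0)).2)).1, 0)).1
        + (Finv (0, (F (0, (E (y, 0)).2)).2)).1 = 0 := by
      rw [← fst_split, Prod.mk.eta, hF2p]
    rw [show (Einv ((E (y, 0)).1, 0)).2 = -((F (0, (E (y, 0)).2)).2) from by
      linear_combination (norm := abel) ha - hb]
    rw [fst_inr_neg]
    linear_combination (norm := abel) -hc
  have I7 : C.comp U + V.comp L = 0 := by
    ext x
    simp only [hC, hL, add_apply, comp_apply, b11_apply, neg_apply, map_neg, zero_apply]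
    have hfst : (Einv (U x, 0)).1 = V ((F (x, 0)).1) := by simpa using congrArg Prod.fst (h1 (x, 0))
    linear_combination (norm := abel) hfst
  have I8 : C.comp K + V.comp M = ContinuousLinearMap.id ℝ Y := by
    ext y
    simp only [hC, hK, hM, add_apply, comp_apply, b11_apply, b12_apply, b21_apply, id_apply]
    have hb : (Einv (0, (E (y, 0)).2)).1 = V ((F (0, (E (y, 0)).2)).1) := by
      simpa using congrArg Prod.fst (h1 (0, (E (y, 0)).2))
    have hs : (Einv ((E (y, 0)).1, 0)).1 + (Einv (0, (E (y, 0)).2)).1 = y := by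
      rw [← fst_split, Prod.mk.eta, hE2p]
    linear_combination (norm := abel) hs - hb
  exact main_from_coupling U V K L M A B C I1 I2 I3 I4 I5 I6 I7 I8
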